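/- Let N be a normal operator on a finite-dimensional complex inner product space, λ ∈ ℂ, ε ≥ 0, a > 1, and X a subspace with ‖(N − λ)x‖ ≤ ε‖x‖ for all x ∈ X. Let P be the orthogonal projection onto the span R(λ, aε) of eigenvectors of N with eigenvalues within distance aε of λ. Then ‖Px‖ ≥ √(1 − 1/a²)·‖x‖ for all x ∈ X. -/

import Mathlib

open Module.End LinearMap Submodule

local notation "⟪" x ", " y "⟫" => @inner ℂ _ _ x y

section Aux
variable {L : Type*} [NormedAddCommGroup L] [InnerProductSpace ℂ L]

lemma pyth_sum {ι : Type*} (s : Finset ι) (v : ι → L)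
    (h : ∀ i ∈ s, ∀ j ∈ s, i ≠ j → ⟪v i, v j⟫ = 0) :
    ‖∑ i ∈ s, v i‖ ^ 2 = ∑ i ∈ s, ‖v i‖ ^ 2 := by
  have h1 : ⟪∑ i ∈ s, v i, ∑ j ∈ s, v j⟫ = ∑ i ∈ s, ⟪v i, v i⟫ := by
    rw [sum_inner]
    refine Finset.sum_congr rfl fun i hi => ?_
    rw [inner_sum]
    exact Finset.sum_eq_single_of_mem i hi fun j hj hne => h i hi j hj (fun e => hne e.symm)
  have h2 : ‖∑ i ∈ s, v i‖ ^ 2 = RCLike.re ⟪∑ i ∈ s, v i, ∑ j ∈ s, v j⟫ :=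
    (inner_self_eq_norm_sq _).symm
  rw [h2, h1, map_sum]
  exact Finset.sum_congr rfl fun i _ => inner_self_eq_norm_sq _

variable [FiniteDimensional ℂ L]

lemma adj_eig (N : L →ₗ[ℂ] L)
    (hN : LinearMap.adjoint N * N = N * LinearMap.adjoint N)
    (α : ℂ) (x : L) (hx : N x = α • x) :
    LinearMap.adjoint N x = (starRingEnd ℂ) α • x := by
  set c := (starRingEnd ℂ) α with hc
  have hadj2 : ⟪x, LinearMap.adjoint N x⟫ = c * ⟪x, x⟫ := by
    rw [LinearMap.adjoint_inner_right, hx, inner_smul_left]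
  set w := LinearMap.adjoint N x - c • x with hw
  have key : ⟪w, w⟫ = 0 := by
    have hNN : N (LinearMap.adjoint N x) = LinearMap.adjoint N (N x) := by
      have := congrArg (fun f => f x) hN
      simpa using this.symm
    have e1 : ⟪LinearMap.adjoint N x, LinearMap.adjoint N x⟫ = (α * c) * ⟪x, x⟫ := by
      rw [LinearMap.adjoint_inner_left, hNN, hx, map_smul, inner_smul_right, hadj2]
      ring
    have e2 : ⟪LinearMap.adjoint N x, c • x⟫ = (α * c) * ⟪x, x⟫ := by
      rw [inner_smul_right, LinearMap.adjoint_inner_left, hx, inner_smul_right]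
      ring
    have e3 : ⟪c • x, LinearMap.adjoint N x⟫ = (α * c) * ⟪x, x⟫ := by
      rw [inner_smul_left, hadj2, hc, Complex.conj_conj]
      ring
    have e4 : ⟪c • x, c • x⟫ = (α * c) * ⟪x, x⟫ := by
      rw [inner_smul_left, inner_smul_right, hc, Complex.conj_conj]
      ring
    rw [hw, inner_sub_left, inner_sub_right, inner_sub_right, e1, e2, e3, e4]
    ring
  have h0 := inner_self_eq_zero.mp key
  rw [hw] at h0
  exact sub_eq_zero.mp h0

end Aux

set_option maxHeartbeats 1000000 in
/-- Lemma (part 2): with `N`, `λ`, `ε`, `X` as before and `a > 1`, the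
orthogonal projection `P` onto the span of eigenvectors with eigenvalue
within `a·ε` of `λ` satisfies `‖P x‖ ≥ √(1 - 1/a²)·‖x‖` on `X`. -/
theorem stmt_8 {L : Type*} [NormedAddCommGroup L] [InnerProductSpace ℂ L]
    [FiniteDimensional ℂ L] (N : L →ₗ[ℂ] L)
    (hN : LinearMap.adjoint N * N = N * LinearMap.adjoint N)
    (lam : ℂ) (ε : ℝ) (hε : 0 ≤ ε) (a : ℝ) (ha : 1 < a)
    (X : Submodule ℂ L)
    (hX : ∀ x ∈ X, ‖N x - lam • x‖ ≤ ε * ‖x‖)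
    (R : Submodule ℂ L)
    (hR : R = Submodule.span ℂ
      {x : L | x ≠ 0 ∧ ∃ α : ℂ, ‖lam - α‖ ≤ a * ε ∧ N x = α • x}) :
    ∀ x ∈ X, Real.sqrt (1 - 1 / a ^ 2) * ‖x‖ ≤ ‖(R.orthogonalProjection x : L)‖ := by
  set Ns := LinearMap.adjoint N with hNs
  set A : L →ₗ[ℂ] L := N + Ns with hA_def
  set B : L →ₗ[ℂ] L := Complex.I • (Ns - N) with hB_def
  have hA : A.IsSymmetric := by
    intro x y
    rw [hA_def]
    simp only [LinearMap.add_apply, inner_add_left, inner_add_right, hNs]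
    rw [LinearMap.adjoint_inner_left, LinearMap.adjoint_inner_right]
    ring
  have hB : B.IsSymmetric := by
    intro x y
    rw [hB_def]
    simp only [LinearMap.smul_apply, LinearMap.sub_apply, inner_smul_left, inner_smul_right,
      inner_sub_left, inner_sub_right, hNs, Complex.conj_I]
    rw [LinearMap.adjoint_inner_left, LinearMap.adjoint_inner_right]
    ring
  have hAB : Commute A B := by
    rw [Commute, SemiconjBy, hA_def, hB_def]
    rw [mul_smul_comm, smul_mul_assoc]
    congr 1
    simp only [mul_sub, sub_mul, add_mul, mul_add]
    rw [hN]
    abel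
  -- the joint eigenspace family
  set F : ℂ × ℂ → Submodule ℂ L := fun p => eigenspace A p.1 ⊓ eigenspace B p.2 with hF_def
  set ν : ℂ × ℂ → ℂ := fun p => (p.1 + Complex.I * p.2) / 2 with hν_def
  have hFE : ∀ p, ∀ x ∈ F p, N x = ν p • x := by
    intro p x hx
    obtain ⟨h1, h2⟩ := Submodule.mem_inf.mp hx
    rw [mem_eigenspace_iff] at h1 h2
    rw [hA_def] at h1; rw [hB_def] at h2
    simp only [LinearMap.add_apply, LinearMap.smul_apply, LinearMap.sub_apply] at h1 h2
    have h3 : Ns x - N x = (-Complex.I * p.2) • x := by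
      have := congrArg (fun z => (-Complex.I) • z) h2
      simp only [smul_smul] at this
      rw [← this, neg_mul, Complex.I_mul_I, neg_neg, one_smul]
    have h4 : (2:ℂ) • N x = (p.1 + Complex.I * p.2) • x := by
      have : (2:ℂ) • N x = (N x + Ns x) - (Ns x - N x) := by module
      rw [this, h1, h3, ← sub_smul]
      congr 1
      ring
    have := congrArg (fun z => (2⁻¹ : ℂ) • z) h4
    simp only [smul_smul] at this
    norm_num at this
    rw [this]
    show _ = ((p.1 + Complex.I * p.2) / 2) • x
    congr 1
    ring
  have hOrtho : ∀ p q : ℂ × ℂ, p ≠ q → ∀ x ∈ F p, ∀ y ∈ F q, ⟪x, y⟫ = 0 := by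
    intro p q hpq x hx y hy
    have hOF := LinearMap.IsSymmetric.orthogonalFamily_eigenspace_inf_eigenspace hA hB
    have hne : (p.2, p.1) ≠ (q.2, q.1) := by
      intro h
      apply hpq
      have h1 := congrArg Prod.fst h
      have h2 := congrArg Prod.snd h
      exact Prod.ext h2 h1
    obtain ⟨hx1, hx2⟩ := Submodule.mem_inf.mp hx
    obtain ⟨hy1, hy2⟩ := Submodule.mem_inf.mp hy
    have := hOF hne
      (⟨x, Submodule.mem_inf.mpr ⟨hx1, hx2⟩⟩ :
        (eigenspace A (p.2,p.1).2 ⊓ eigenspace B (p.2,p.1).1 : Submodule ℂ L))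
      (⟨y, Submodule.mem_inf.mpr ⟨hy1, hy2⟩⟩ :
        (eigenspace A (q.2,q.1).2 ⊓ eigenspace B (q.2,q.1).1 : Submodule ℂ L))
    simpa using this
  have hTopF : (⨆ p : ℂ × ℂ, F p) = ⊤ := by
    have h := LinearMap.IsSymmetric.iSup_iSup_eigenspace_inf_eigenspace_eq_top_of_commute hA hB hAB
    rw [← h, iSup_prod]
  set Cl : Set (ℂ × ℂ) := {p | ‖lam - ν p‖ ≤ a * ε} with hCl_def
  -- R is the sup of close joint eigenspaces
  have hR2 : R = ⨆ p ∈ Cl, F p := by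
    apply le_antisymm
    · rw [hR]
      apply Submodule.span_le.mpr
      rintro x ⟨hx0, α, hαcl, hαeig⟩
      have hns : Ns x = (starRingEnd ℂ) α • x := adj_eig N hN α x hαeig
      set p₀ : ℂ × ℂ := (α + (starRingEnd ℂ) α, Complex.I * ((starRingEnd ℂ) α - α)) with hp₀
      have hxF : x ∈ F p₀ := by
        refine Submodule.mem_inf.mpr ⟨mem_eigenspace_iff.mpr ?_, mem_eigenspace_iff.mpr ?_⟩
        · rw [hA_def]
          simp only [LinearMap.add_apply, hαeig, hns, ← add_smul]
          rfl
        · rw [hB_def]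
          simp only [LinearMap.smul_apply, LinearMap.sub_apply, hαeig, hns, ← sub_smul,
            smul_smul]
          rfl
      have hν₀ : ν p₀ = α := by
        show (p₀.1 + Complex.I * p₀.2) / 2 = α
        rw [hp₀]
        have := Complex.I_sq
        field_simp
        linear_combination ((starRingEnd ℂ) α - α) * Complex.I_sq
      have hp₀Cl : p₀ ∈ Cl := by
        show ‖lam - ν p₀‖ ≤ a * ε
        rw [hν₀]; exact hαcl
      exact le_iSup₂ (f := fun p (_ : p ∈ Cl) => F p) p₀ hp₀Cl hxF
    · refine iSup₂_le fun p hp => ?_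
      intro x hx
      by_cases hx0 : x = 0
      · simp [hx0]
      · rw [hR]
        exact Submodule.subset_span ⟨hx0, ν p, hp, hFE p x hx⟩
  -- the far part
  set Sf : Submodule ℂ L := ⨆ p ∈ {q : ℂ × ℂ | q ∉ Cl}, F p with hSf_def
  have hSfar : ∀ p, p ∉ Cl → F p ≤ Sf := fun p hp =>
    le_iSup₂ (f := fun p (_ : p ∈ {q : ℂ × ℂ | q ∉ Cl}) => F p) p hp
  have hTopRS : R ⊔ Sf = ⊤ := by
    rw [eq_top_iff, ← hTopF]
    refine iSup_le fun p => ?_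
    by_cases hp : p ∈ Cl
    · exact le_trans (le_iSup₂ (f := fun p (_ : p ∈ Cl) => F p) p hp) (hR2 ▸ le_sup_left)
    · exact le_trans (hSfar p hp) le_sup_right
  have hSfR : Sf ≤ Rᗮ := by
    have : R ⟂ Sf := by
      rw [hR2, hSf_def]
      rw [Submodule.isOrtho_iSup_left]
      intro p
      rw [Submodule.isOrtho_iSup_left]
      intro hp
      rw [Submodule.isOrtho_iSup_right]
      intro q
      rw [Submodule.isOrtho_iSup_right]
      intro hq
      refine Submodule.isOrtho_iff_inner_eq.mpr fun u hu v hv => ?_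
      exact hOrtho p q (fun e => hq (e ▸ hp)) u hu v hv
    exact Submodule.isOrtho_iff_le.mp this.symm
  have hRperp : Rᗮ = Sf := by
    refine le_antisymm ?_ hSfR
    have hmod : Rᗮ ⊓ R ⊔ Sf = Rᗮ ⊓ (R ⊔ Sf) := inf_sup_assoc_of_le _ hSfR
    rw [hTopRS, inf_top_eq] at hmod
    rw [inf_comm, Submodule.inf_orthogonal_eq_bot, bot_sup_eq] at hmod
    exact hmod.ge
  -- the operator T = N - lam
  set T : L →ₗ[ℂ] L := N - lam • LinearMap.id with hT_def
  have hTapp : ∀ z : L, T z = N z - lam • z := by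
    intro z
    rw [hT_def]
    simp
  have hTF : ∀ p, ∀ x ∈ F p, T x = (ν p - lam) • x := by
    intro p x hx
    rw [hTapp, hFE p x hx, ← sub_smul]
  have hTR : ∀ y ∈ R, T y ∈ R := by
    have : R ≤ Submodule.comap T R := by
      nth_rewrite 1 [hR2]
      refine iSup₂_le fun p hp => fun x hx => ?_
      rw [Submodule.mem_comap, hTF p x hx]
      have : x ∈ R := by
        rw [hR2]
        exact le_iSup₂ (f := fun p (_ : p ∈ Cl) => F p) p hp hx
      exact Submodule.smul_mem _ _ this
    exact fun y hy => this hy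
  have hTSf : ∀ y ∈ Sf, T y ∈ Sf := by
    have : Sf ≤ Submodule.comap T Sf := by
      nth_rewrite 1 [hSf_def]
      refine iSup₂_le fun p hp => fun x hx => ?_
      rw [Submodule.mem_comap, hTF p x hx]
      exact Submodule.smul_mem _ _ (hSfar p hp hx)
    exact fun y hy => this hy
  -- key lower estimate on Sf
  have hKey : ∀ y ∈ Sf, (a * ε) * ‖y‖ ≤ ‖T y‖ := by
    intro y hy
    rw [hSf_def] at hy
    rw [Submodule.mem_iSup_iff_exists_finsupp] at hy
    obtain ⟨f, hf, hsum⟩ := hy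
    have haε : (0:ℝ) ≤ a * ε := mul_nonneg (le_of_lt (lt_trans one_pos ha)) hε
    have hfF : ∀ p, f p ∈ F p := by
      intro p
      by_cases hp : p ∈ Cl
      · have h0 : (⨆ (_ : p ∈ {q : ℂ × ℂ | q ∉ Cl}), F p) = ⊥ := iSup_neg (by simpa using hp)
        have := hf p
        rw [h0, Submodule.mem_bot] at this
        rw [this]; exact Submodule.zero_mem _
      · have h0 : (⨆ (_ : p ∈ {q : ℂ × ℂ | q ∉ Cl}), F p) = F p := iSup_pos (by simpa using hp)
        have := hf p
        rwa [h0] at this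
    have hfzero : ∀ p ∈ Cl, f p = 0 := by
      intro p hp
      have h0 : (⨆ (_ : p ∈ {q : ℂ × ℂ | q ∉ Cl}), F p) = ⊥ := iSup_neg (by simpa using hp)
      have := hf p
      rwa [h0, Submodule.mem_bot] at this
    have hterm : ∀ p, (a * ε) * ‖f p‖ ≤ ‖T (f p)‖ := by
      intro p
      by_cases hp : p ∈ Cl
      · rw [hfzero p hp]
        simp
      · rw [hTF p _ (hfF p), norm_smul]
        have h1 : a * ε < ‖ν p - lam‖ := by
          rw [norm_sub_rev]
          exact lt_of_not_ge hp
        exact mul_le_mul_of_nonneg_right (le_of_lt h1) (norm_nonneg _)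
    have hy_eq : y = ∑ p ∈ f.support, f p := hsum.symm
    have hTy_eq : T y = ∑ p ∈ f.support, T (f p) := by
      rw [hy_eq, map_sum]
    have hTfF : ∀ p, T (f p) ∈ F p := fun p => by
      rw [hTF p _ (hfF p)]; exact Submodule.smul_mem _ _ (hfF p)
    have hpy1 : ‖y‖ ^ 2 = ∑ p ∈ f.support, ‖f p‖ ^ 2 := by
      rw [hy_eq]
      exact pyth_sum _ _ fun i _ j _ hij => hOrtho i j hij _ (hfF i) _ (hfF j)
    have hpy2 : ‖T y‖ ^ 2 = ∑ p ∈ f.support, ‖T (f p)‖ ^ 2 := by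
      rw [hTy_eq]
      exact pyth_sum _ _ fun i _ j _ hij => hOrtho i j hij _ (hTfF i) _ (hTfF j)
    have hsq : ((a * ε) * ‖y‖) ^ 2 ≤ ‖T y‖ ^ 2 := by
      rw [mul_pow, hpy1, hpy2, Finset.mul_sum]
      refine Finset.sum_le_sum fun p _ => ?_
      have := hterm p
      calc (a * ε) ^ 2 * ‖f p‖ ^ 2 = ((a * ε) * ‖f p‖) ^ 2 := by ring
        _ ≤ ‖T (f p)‖ ^ 2 :=
          pow_le_pow_left₀ (mul_nonneg haε (norm_nonneg _)) this 2
    have := Real.sqrt_le_sqrt hsq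
    rwa [Real.sqrt_sq (mul_nonneg haε (norm_nonneg _)), Real.sqrt_sq (norm_nonneg _)] at this
  -- main argument
  intro x hx
  have h1a : (0:ℝ) < a := lt_trans one_pos ha
  have h1a2 : (0:ℝ) ≤ 1 - 1 / a ^ 2 := by
    rw [sub_nonneg, div_le_one (by positivity)]
    nlinarith
  set u : L := ↑(orthogonalProjection R x) with hu_def
  have hu : u ∈ R := SetLike.coe_mem _
  have hv : x - u ∈ Rᗮ := R.sub_starProjection_mem_orthogonal x
  have hvSf : x - u ∈ Sf := by rwa [hRperp] at hv
  have hTu : T u ∈ R := hTR u hu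
  have hTv : T (x - u) ∈ Rᗮ := by
    rw [hRperp]
    exact hTSf _ hvSf
  have hin1 : ⟪u, x - u⟫ = 0 := (Submodule.mem_orthogonal R (x - u)).mp hv u hu
  have hin2 : ⟪T u, T (x - u)⟫ = 0 :=
    (Submodule.mem_orthogonal R (T (x - u))).mp hTv (T u) hTu
  have hx_sq : ‖x‖ ^ 2 = ‖u‖ ^ 2 + ‖x - u‖ ^ 2 := by
    have := norm_add_sq_eq_norm_sq_add_norm_sq_of_inner_eq_zero u (x - u) hin1
    rw [add_sub_cancel] at this
    simp only [pow_two]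
    exact this
  have hT_sq : ‖T x‖ ^ 2 = ‖T u‖ ^ 2 + ‖T (x - u)‖ ^ 2 := by
    have := norm_add_sq_eq_norm_sq_add_norm_sq_of_inner_eq_zero (T u) (T (x - u)) hin2
    rw [← map_add, add_sub_cancel] at this
    simp only [pow_two]
    exact this
  have hTx_le : ‖T x‖ ≤ ε * ‖x‖ := by
    rw [hTapp]
    exact hX x hx
  by_cases hε0 : ε = 0
  · -- x is itself an eigenvector with eigenvalue lam, so x ∈ R
    have hTx0 : T x = 0 := by
      have : ‖T x‖ ≤ 0 := by simpa [hε0] using hTx_le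
      exact norm_le_zero_iff.mp this
    have hxR : x ∈ R := by
      by_cases hx0 : x = 0
      · rw [hx0]; exact Submodule.zero_mem _
      · rw [hR]
        refine Submodule.subset_span ⟨hx0, lam, ?_, ?_⟩
        · simp [hε0]
        · have := hTapp x
          rw [hTx0] at this
          exact sub_eq_zero.mp this.symm
    have hux : u = x := R.starProjection_eq_self_iff.mpr hxR
    rw [hux]
    have h2 : Real.sqrt (1 - 1 / a ^ 2) ≤ 1 := Real.sqrt_le_one.mpr (by nlinarith [one_div_pos.mpr (pow_pos h1a 2)])
    nlinarith [norm_nonneg x]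
  · have hεpos : 0 < ε := lt_of_le_of_ne hε (Ne.symm hε0)
    have hkey := hKey _ hvSf
    have hchain : (a * ε) ^ 2 * ‖x - u‖ ^ 2 ≤ ε ^ 2 * ‖x‖ ^ 2 := by
      have e1 : ((a * ε) * ‖x - u‖) ^ 2 ≤ ‖T (x - u)‖ ^ 2 :=
        pow_le_pow_left₀ (mul_nonneg (mul_nonneg h1a.le hε) (norm_nonneg _)) hkey 2
      have e2 : ‖T x‖ ^ 2 ≤ (ε * ‖x‖) ^ 2 :=
        pow_le_pow_left₀ (norm_nonneg _) hTx_le 2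
      nlinarith [sq_nonneg ‖T u‖]
    have hvu : ‖x - u‖ ^ 2 ≤ ‖x‖ ^ 2 / a ^ 2 := by
      rw [le_div_iff₀ (by positivity)]
      have ha2 : (0:ℝ) < ε ^ 2 := by positivity
      nlinarith
    have hu_sq : (1 - 1 / a ^ 2) * ‖x‖ ^ 2 ≤ ‖u‖ ^ 2 := by
      have : ‖u‖ ^ 2 = ‖x‖ ^ 2 - ‖x - u‖ ^ 2 := by linarith
      rw [this]
      have : ‖x‖ ^ 2 / a ^ 2 = (1 / a ^ 2) * ‖x‖ ^ 2 := by ring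
      nlinarith
    have hs : Real.sqrt ((1 - 1 / a ^ 2) * ‖x‖ ^ 2) ≤ Real.sqrt (‖u‖ ^ 2) :=
      Real.sqrt_le_sqrt hu_sq
    rwa [Real.sqrt_mul h1a2, Real.sqrt_sq (norm_nonneg x), Real.sqrt_sq (norm_nonneg u)] at hs
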